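/- Let β > 0 be real, and let d, i be positive integers with i ≤ d/3. Then C(d,3i) · (3i)!/(i!·6^i) · i^(d-3i) · β^(i-d+1) ≤ (β·d/e) · (d/β)^(d-i) · 0.549474^d. -/

import Mathlib

lemma log_aux1 : (0.0338215484 : ℝ) ≤ Real.log (1293/1250) ∧
    Real.log (1293/1250) ≤ 0.0338215486 := by
  have hle : (-43/1250 : ℝ) ≤ 0 := by norm_num
  have hx : |(-43/1250 : ℝ)| < 1 := by rw [abs_of_nonpos hle]; norm_num
  have h := Real.abs_log_sub_add_sum_range_le hx 6
  rw [abs_of_nonpos hle, abs_le] at h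
  norm_num [Finset.sum_range_succ] at h
  constructor <;> linarith [h.1, h.2]

lemma log_aux2 : (-0.1089224074 : ℝ) ≤ Real.log (1121/1250) ∧
    Real.log (1121/1250) ≤ -0.1089224070 := by
  have hle : (0:ℝ) ≤ 129/1250 := by norm_num
  have hx : |(129/1250 : ℝ)| < 1 := by rw [abs_of_nonneg hle]; norm_num
  have h := Real.abs_log_sub_add_sum_range_le hx 9
  rw [abs_of_nonneg hle, abs_le] at h
  norm_num [Finset.sum_range_succ] at h
  constructor <;> linarith [h.1, h.2]

lemma log_aux3 : (-0.2876820728 : ℝ) ≤ Real.log (3/4) ∧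
    Real.log (3/4) ≤ -0.2876820721 := by
  have hle : (0:ℝ) ≤ 1/4 := by norm_num
  have hx : |(1/4 : ℝ)| < 1 := by rw [abs_of_nonneg hle]; norm_num
  have h := Real.abs_log_sub_add_sum_range_le hx 15
  rw [abs_of_nonneg hle, abs_le] at h
  norm_num [Finset.sum_range_succ] at h
  constructor <;> linarith [h.1, h.2]

lemma log_aux4 : (0.0943533584 : ℝ) ≤ Real.log (274737/250000) ∧
    Real.log (274737/250000) ≤ 0.0943533587 := by
  have hle : (-24737/250000 : ℝ) ≤ 0 := by norm_num
  have hx : |(-24737/250000 : ℝ)| < 1 := by rw [abs_of_nonpos hle]; norm_num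
  have h := Real.abs_log_sub_add_sum_range_le hx 9
  rw [abs_of_nonpos hle, abs_le] at h
  norm_num [Finset.sum_range_succ] at h
  constructor <;> linarith [h.1, h.2]

lemma log4_eq : Real.log 4 = 2 * Real.log 2 := by
  rw [show (4:ℝ) = 2^2 by norm_num, Real.log_pow]; push_cast; ring

lemma l1_bounds : (-1.3524729 : ℝ) ≤ Real.log 0.2586 ∧ Real.log 0.2586 ≤ -1.3524728 := by
  have he : (0.2586 : ℝ) = (1293/1250)/4 := by norm_num
  have h : Real.log 0.2586 = Real.log (1293/1250) - Real.log 4 := by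
    rw [he, Real.log_div (by norm_num) (by norm_num)]
  obtain ⟨h1, h2⟩ := log_aux1
  have g1 := Real.log_two_gt_d9; have g2 := Real.log_two_lt_d9
  rw [log4_eq] at h
  constructor <;> (rw [h]; linarith)

lemma l2p_bounds : (-1.4952168 : ℝ) ≤ Real.log 0.2242 ∧ Real.log 0.2242 ≤ -1.4952167 := by
  have he : (0.2242 : ℝ) = (1121/1250)/4 := by norm_num
  have h : Real.log 0.2242 = Real.log (1121/1250) - Real.log 4 := by
    rw [he, Real.log_div (by norm_num) (by norm_num)]
  obtain ⟨h1, h2⟩ := log_aux2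
  have g1 := Real.log_two_gt_d9; have g2 := Real.log_two_lt_d9
  rw [log4_eq] at h
  constructor <;> (rw [h]; linarith)

lemma l6_bounds : (1.7917594 : ℝ) ≤ Real.log 6 ∧ Real.log 6 ≤ 1.7917595 := by
  have he : (6 : ℝ) = 8 * (3/4) := by norm_num
  have h8 : Real.log 8 = 3 * Real.log 2 := by
    rw [show (8:ℝ) = 2^3 by norm_num, Real.log_pow]; push_cast; ring
  have h : Real.log 6 = 3 * Real.log 2 + Real.log (3/4) := by
    rw [he, Real.log_mul (by norm_num) (by norm_num), h8]
  obtain ⟨h1, h2⟩ := log_aux3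
  have g1 := Real.log_two_gt_d9; have g2 := Real.log_two_lt_d9
  constructor <;> (rw [h]; linarith)

lemma lc_bounds : (-0.5987939 : ℝ) ≤ Real.log 0.549474 ∧ Real.log 0.549474 ≤ -0.5987938 := by
  have he : (0.549474 : ℝ) = (274737/250000)/2 := by norm_num
  have h : Real.log 0.549474 = Real.log (274737/250000) - Real.log 2 := by
    rw [he, Real.log_div (by norm_num) (by norm_num)]
  obtain ⟨h1, h2⟩ := log_aux4
  have g1 := Real.log_two_gt_d9; have g2 := Real.log_two_lt_d9
  constructor <;> (rw [h]; linarith)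


set_option maxHeartbeats 1000000 in
lemma G_nonpos {a : ℝ} (ha : 0 < a) (ha3 : a < 1/3) :
    (1 - 4*a) * Real.log a - (1 - 3*a) * Real.log (1 - 3*a) - 2*a - a * Real.log 6
      - Real.log 0.549474 ≤ 0 := by
  obtain ⟨hl6, hl6'⟩ := l6_bounds
  obtain ⟨hlc, hlc'⟩ := lc_bounds
  have hmu : 0 < 1 - 3*a := by linarith
  rcases le_or_gt a (1/4) with hA | hB
  · -- region (0, 1/4]
    have t1 : Real.log a ≤ 4*a - 2.3862943606 := by
      have h := Real.log_le_sub_one_of_pos (show (0:ℝ) < 4*a by linarith)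
      have h2 : Real.log (4*a) = Real.log 4 + Real.log a :=
        Real.log_mul (by norm_num) (ne_of_gt ha)
      have h3 := log4_eq
      have g1 := Real.log_two_gt_d9
      linarith
    have t2 : (-0.3862943616 : ℝ) - 1/(4*(1-3*a)) ≤ Real.log (1-3*a) := by
      have h := Real.log_le_sub_one_of_pos (show (0:ℝ) < 1/(4*(1-3*a)) by positivity)
      have h2 : Real.log (1/(4*(1-3*a))) = -(Real.log 4 + Real.log (1-3*a)) := by
        rw [one_div, Real.log_inv, Real.log_mul (by norm_num) (ne_of_gt hmu)]
      have h3 := log4_eq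
      have g2 := Real.log_two_lt_d9
      linarith
    have m1 : (1-4*a) * Real.log a ≤ (1-4*a) * (4*a - 2.3862943606) :=
      mul_le_mul_of_nonneg_left t1 (by linarith)
    have m2 : (1-3*a) * ((-0.3862943616 : ℝ) - 1/(4*(1-3*a))) ≤ (1-3*a) * Real.log (1-3*a) :=
      mul_le_mul_of_nonneg_left t2 (by linarith)
    have e1 : (1-3*a) * (1/(4*(1-3*a))) = 1/4 := by
      field_simp
    have m3 : a * 1.7917594 ≤ a * Real.log 6 := mul_le_mul_of_nonneg_left hl6 ha.le
    nlinarith [m1, m2, m3, e1,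
      mul_nonneg (show (0:ℝ) ≤ 1/4 - a by linarith) (show (0:ℝ) ≤ 43/10 - 16*a by linarith)]
  · -- region [1/4, 1/3)
    have h14 : 1 - 4*a ≤ 0 := by linarith
    obtain ⟨hl1, _⟩ := l1_bounds
    obtain ⟨hl2p, _⟩ := l2p_bounds
    have t1 : (-0.3524729 : ℝ) - 0.2586/a ≤ Real.log a := by
      have h := Real.log_le_sub_one_of_pos (show (0:ℝ) < 0.2586/a by positivity)
      have h2 : Real.log (0.2586/a) = Real.log 0.2586 - Real.log a :=
        Real.log_div (by norm_num) (ne_of_gt ha)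
      linarith
    have t2 : (-0.4952168 : ℝ) - 0.2242/(1-3*a) ≤ Real.log (1-3*a) := by
      have h := Real.log_le_sub_one_of_pos (show (0:ℝ) < 0.2242/(1-3*a) by positivity)
      have h2 : Real.log (0.2242/(1-3*a)) = Real.log 0.2242 - Real.log (1-3*a) :=
        Real.log_div (by norm_num) (ne_of_gt hmu)
      linarith
    have T1 : a*(1-4*a)*Real.log a ≤ -0.3524729*(a*(1-4*a)) - 0.2586*(1-4*a) := by
      have hco : a*(1-4*a) ≤ 0 := by nlinarith
      have h := mul_le_mul_of_nonpos_left t1 hco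
      have he : a*(1-4*a) * ((-0.3524729 : ℝ) - 0.2586/a)
          = -0.3524729*(a*(1-4*a)) - 0.2586*(1-4*a) := by
        field_simp
      linarith [he ▸ h]
    have T2 : -0.4952168*(a*(1-3*a)) - 0.2242*a ≤ a*(1-3*a)*Real.log (1-3*a) := by
      have hco : 0 ≤ a*(1-3*a) := by positivity
      have h := mul_le_mul_of_nonneg_left t2 hco
      have he : a*(1-3*a) * ((-0.4952168 : ℝ) - 0.2242/(1-3*a))
          = -0.4952168*(a*(1-3*a)) - 0.2242*a := by
        have hk : (1-3*a) * ((0.2242 : ℝ)/(1-3*a)) = 0.2242 := by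
          rw [mul_comm]; exact div_mul_cancel₀ _ hmu.ne'
        linear_combination (-a) * hk
      linarith [he ▸ h]
    have m3 : a^2 * 1.7917594 ≤ a^2 * Real.log 6 :=
      mul_le_mul_of_nonneg_left hl6 (sq_nonneg a)
    have m4 : a * (-0.5987939) ≤ a * Real.log 0.549474 :=
      mul_le_mul_of_nonneg_left hlc ha.le
    have key : (-3.8675182 : ℝ)*a^2 + 2.0001378*a - 0.2586 ≤ 0 := by
      linarith [sq_nonneg ((-3.8675182 : ℝ)*2*a + 2.0001378)]
    have hG : a * ((1 - 4*a) * Real.log a - (1 - 3*a) * Real.log (1 - 3*a) - 2*a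
        - a * Real.log 6 - Real.log 0.549474) ≤ 0 := by
      nlinarith [T1, T2, m3, m4, key]
    by_contra hcon
    push_neg at hcon
    nlinarith [mul_pos ha hcon]


lemma main_ineq (x y : ℝ) (hx : 0 < x) (hxy : 3*x ≤ y) :
    x*Real.log y - 2*x - (y - 3*x)*Real.log (y - 3*x) + (y - 3*x)*Real.log x
      - x*Real.log x - x*Real.log 6 - y*Real.log 0.549474 ≤ 0 := by
  have hy : 0 < y := lt_of_lt_of_le (by linarith) hxy
  rcases eq_or_lt_of_le hxy with heq | hlt
  · rw [← heq]
    have h3 : Real.log (3*x) = Real.log 3 + Real.log x := Real.log_mul (by norm_num) hx.ne'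
    have h63 : Real.log 6 = Real.log 2 + Real.log 3 := by
      rw [show (6:ℝ) = 2*3 by norm_num, Real.log_mul (by norm_num) (by norm_num)]
    obtain ⟨hlc, _⟩ := lc_bounds
    have g1 := Real.log_two_gt_d9
    have hfac : Real.log 3 - 2 - Real.log 6 - 3*Real.log 0.549474 ≤ 0 := by linarith
    calc x*Real.log (3*x) - 2*x - (3*x - 3*x)*Real.log (3*x - 3*x)
          + (3*x - 3*x)*Real.log x - x*Real.log x - x*Real.log 6 - 3*x*Real.log 0.549474
        = x * (Real.log 3 - 2 - Real.log 6 - 3*Real.log 0.549474) := by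
          rw [h3]; ring
      _ ≤ 0 := mul_nonpos_of_nonneg_of_nonpos hx.le hfac
  · set a := x/y with hadef
    have ha : 0 < a := div_pos hx hy
    have ha3 : a < 1/3 := by
      rw [hadef, div_lt_iff₀ hy]; linarith
    have hxa : x = a*y := by rw [hadef]; field_simp
    have hmuy : y - 3*x = (1-3*a)*y := by rw [hxa]; ring
    have hmupos : 0 < 1-3*a := by linarith
    have hlx : Real.log x = Real.log a + Real.log y := by
      rw [hxa, Real.log_mul ha.ne' hy.ne']
    have hlm : Real.log (y - 3*x) = Real.log (1-3*a) + Real.log y := by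
      rw [hmuy, Real.log_mul hmupos.ne' hy.ne']
    have hG := G_nonpos ha ha3
    calc x*Real.log y - 2*x - (y - 3*x)*Real.log (y - 3*x) + (y - 3*x)*Real.log x
          - x*Real.log x - x*Real.log 6 - y*Real.log 0.549474
        = y * ((1 - 4*a) * Real.log a - (1 - 3*a) * Real.log (1 - 3*a) - 2*a
            - a * Real.log 6 - Real.log 0.549474) := by
          rw [hlx, hlm, hmuy, hxa]; ring
      _ ≤ 0 := mul_nonpos_of_nonneg_of_nonpos hy.le hG

open Stirling in
lemma stirling_ge (n : ℕ) : Real.sqrt Real.pi ≤ stirlingSeq (n+1) := by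
  refine le_of_tendsto Stirling.tendsto_stirlingSeq_sqrt_pi ?_
  filter_upwards [Filter.eventually_ge_atTop (n+1)] with k hk
  obtain ⟨j, rfl⟩ : ∃ j, k = j + 1 := ⟨k-1, by omega⟩
  exact Stirling.stirlingSeq'_antitone (by omega : n ≤ j)

open Stirling in
lemma stirling_le_e (n : ℕ) : stirlingSeq (n+1) ≤ Real.exp 1 / Real.sqrt 2 := by
  have h := Stirling.stirlingSeq'_antitone (Nat.zero_le n)
  simpa [Stirling.stirlingSeq_one] using h

open Stirling in
lemma log_fact_eq (n : ℕ) (hn : 1 ≤ n) :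
    Real.log (n.factorial : ℝ) = Real.log (stirlingSeq n)
      + (Real.log 2 + Real.log n)/2 + (n:ℝ)*(Real.log n - 1) := by
  have hnp : (0:ℝ) < n := by exact_mod_cast hn
  have hfe : (n.factorial : ℝ) = stirlingSeq n * (Real.sqrt (2*n) * ((n:ℝ)/Real.exp 1)^n) := by
    rw [Stirling.stirlingSeq, div_mul_cancel₀]
    positivity
  rw [hfe]
  obtain ⟨m, rfl⟩ : ∃ m, n = m + 1 := ⟨n-1, by omega⟩
  have hs : 0 < stirlingSeq (m+1) := Stirling.stirlingSeq'_pos m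
  rw [Real.log_mul hs.ne' (by positivity), Real.log_mul (by positivity) (by positivity),
    Real.log_sqrt (by positivity), Real.log_mul (by norm_num) hnp.ne', Real.log_pow,
    Real.log_div hnp.ne' (Real.exp_ne_zero 1), Real.log_exp]
  ring

open Stirling in
lemma log_fact_le (n : ℕ) (hn : 1 ≤ n) :
    Real.log (n.factorial : ℝ) ≤ 1 + Real.log n / 2 + (n:ℝ) * (Real.log n - 1) := by
  obtain ⟨m, rfl⟩ : ∃ m, n = m + 1 := ⟨n-1, by omega⟩
  have hs : 0 < stirlingSeq (m+1) := Stirling.stirlingSeq'_pos m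
  have h1 : Real.log (stirlingSeq (m+1)) ≤ 1 - Real.log 2 / 2 := by
    have h2 := Real.log_le_log hs (stirling_le_e m)
    rwa [Real.log_div (Real.exp_ne_zero 1) (by positivity), Real.log_exp,
      Real.log_sqrt (by norm_num)] at h2
  rw [log_fact_eq (m+1) hn]
  linarith

open Stirling in
lemma log_fact_ge (n : ℕ) (hn : 1 ≤ n) :
    Real.log 6 / 2 + Real.log n / 2 + (n:ℝ) * (Real.log n - 1)
      ≤ Real.log (n.factorial : ℝ) := by
  obtain ⟨m, rfl⟩ : ∃ m, n = m + 1 := ⟨n-1, by omega⟩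
  have hs : 0 < stirlingSeq (m+1) := Stirling.stirlingSeq'_pos m
  have h1 : Real.log 3 / 2 ≤ Real.log (stirlingSeq (m+1)) := by
    have h2 := Real.log_le_log (by positivity : (0:ℝ) < Real.sqrt Real.pi) (stirling_ge m)
    rw [Real.log_sqrt Real.pi_pos.le] at h2
    have h3 : Real.log 3 ≤ Real.log Real.pi :=
      Real.log_le_log (by norm_num) Real.pi_gt_three.le
    linarith
  have h6 : Real.log 6 = Real.log 2 + Real.log 3 := by
    rw [show (6:ℝ) = 2*3 by norm_num, Real.log_mul (by norm_num) (by norm_num)]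
  rw [log_fact_eq (m+1) hn]
  linarith

lemma log_fact_ge_weak (n : ℕ) :
    (n:ℝ) * (Real.log n - 1) ≤ Real.log (n.factorial : ℝ) := by
  rcases Nat.eq_zero_or_pos n with h0 | h1
  · subst h0; simp
  · have h := log_fact_ge n h1
    have h2 : (0:ℝ) ≤ Real.log 6 := Real.log_nonneg (by norm_num)
    have h3 : (0:ℝ) ≤ Real.log n := Real.log_natCast_nonneg n
    linarith


lemma step2 (d i : ℕ) (hd : 0 < d) (hi : 0 < i) (h3i : 3 * i ≤ d) :
    (d.choose (3 * i) : ℝ) * (((3 * i).factorial : ℝ) / ((i.factorial : ℝ) * 6 ^ i)) *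
      (i : ℝ) ^ (d - 3 * i)
      ≤ (d : ℝ) ^ (d - i) * d * 0.549474 ^ d / Real.exp 1 := by
  by_cases hbig : 10 ≤ d * i
  · -- logarithmic route
    have hdr : (0:ℝ) < d := by exact_mod_cast hd
    have hir : (0:ℝ) < i := by exact_mod_cast hi
    have h3ir : 3*(i:ℝ) ≤ d := by exact_mod_cast h3i
    have hid : i ≤ d := le_trans (by omega) h3i
    have hcast1 : ((d - 3*i : ℕ) : ℝ) = (d:ℝ) - 3*i := by
      push_cast [Nat.cast_sub h3i]; ring
    have hcast2 : ((d - i : ℕ) : ℝ) = (d:ℝ) - i := by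
      push_cast [Nat.cast_sub hid]; ring
    have hch : (0:ℝ) < (d.choose (3*i) : ℝ) := by exact_mod_cast Nat.choose_pos h3i
    have hf3 : (0:ℝ) < ((3*i).factorial : ℝ) := by exact_mod_cast (3*i).factorial_pos
    have hfi : (0:ℝ) < (i.factorial : ℝ) := by exact_mod_cast i.factorial_pos
    have hfm : (0:ℝ) < ((d - 3*i).factorial : ℝ) := by exact_mod_cast (d - 3*i).factorial_pos
    have hfd : (0:ℝ) < (d.factorial : ℝ) := by exact_mod_cast d.factorial_pos
    have hX : (0:ℝ) < (d.choose (3 * i) : ℝ) * (((3 * i).factorial : ℝ) /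
        ((i.factorial : ℝ) * 6 ^ i)) * (i : ℝ) ^ (d - 3 * i) := by positivity
    have hY : (0:ℝ) < (d : ℝ) ^ (d - i) * d * 0.549474 ^ d / Real.exp 1 := by positivity
    refine (Real.log_le_log_iff hX hY).mp ?_
    have hXeq : (d.choose (3 * i) : ℝ) * (((3 * i).factorial : ℝ) /
        ((i.factorial : ℝ) * 6 ^ i)) * (i : ℝ) ^ (d - 3 * i)
        = ((d.factorial : ℝ) * (i:ℝ) ^ (d - 3*i)) /
          (((d - 3*i).factorial : ℝ) * ((i.factorial : ℝ) * 6 ^ i)) := by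
      have hnat : ((d.choose (3*i) : ℝ) * ((3*i).factorial : ℝ)) * ((d - 3*i).factorial : ℝ)
          = (d.factorial : ℝ) := by
        exact_mod_cast Nat.choose_mul_factorial_mul_factorial h3i
      field_simp
      linear_combination hnat
    rw [hXeq]
    have hlogX : Real.log (((d.factorial : ℝ) * (i:ℝ) ^ (d - 3*i)) /
          (((d - 3*i).factorial : ℝ) * ((i.factorial : ℝ) * 6 ^ i)))
        = Real.log (d.factorial : ℝ) + ((d - 3*i : ℕ) : ℝ) * Real.log i
          - Real.log ((d - 3*i).factorial : ℝ) - Real.log (i.factorial : ℝ)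
          - (i:ℝ) * Real.log 6 := by
      rw [Real.log_div (by positivity) (by positivity), Real.log_mul hfd.ne' (by positivity),
        Real.log_mul hfm.ne' (by positivity), Real.log_mul hfi.ne' (by positivity),
        Real.log_pow, Real.log_pow]
      push_cast
      ring
    have hlogY : Real.log ((d : ℝ) ^ (d - i) * d * 0.549474 ^ d / Real.exp 1)
        = ((d - i : ℕ) : ℝ) * Real.log d + Real.log d + (d:ℝ) * Real.log 0.549474 - 1 := by
      rw [Real.log_div (by positivity) (Real.exp_ne_zero 1), Real.log_exp,
        Real.log_mul (by positivity) (by positivity), Real.log_mul (by positivity) hdr.ne',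
        Real.log_pow, Real.log_pow]
    rw [hlogX, hlogY, hcast1, hcast2]
    have hm := main_ineq (i:ℝ) (d:ℝ) hir h3ir
    have h5 : (4:ℝ) ≤ Real.log 6 + Real.log i + Real.log d := by
      have hexp : Real.exp 4 ≤ 6*(i:ℝ)*d := by
        have h1 : Real.exp 1 ≤ 2.7182818286 := Real.exp_one_lt_d9.le
        have h2 : Real.exp 4 = (Real.exp 1)^4 := by
          rw [← Real.exp_nat_mul]
          norm_num
        have h3 : (Real.exp 1)^4 ≤ 2.7182818286^4 :=
          pow_le_pow_left₀ (Real.exp_pos 1).le h1 4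
        have h4 : (10:ℝ) ≤ (d:ℝ)*i := by exact_mod_cast hbig
        nlinarith
      have h6 : Real.log (6*(i:ℝ)*d) = Real.log 6 + Real.log i + Real.log d := by
        rw [Real.log_mul (by positivity) hdr.ne', Real.log_mul (by norm_num) hir.ne']
      calc (4:ℝ) = Real.log (Real.exp 4) := (Real.log_exp 4).symm
        _ ≤ Real.log (6*(i:ℝ)*d) := Real.log_le_log (Real.exp_pos 4) hexp
        _ = _ := h6
    have hfl := log_fact_le d hd
    have hfw := log_fact_ge_weak (d - 3*i)
    have hfg := log_fact_ge i hi
    rw [hcast1] at hfw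
    linarith
  · -- small cases : i = 1, 3 ≤ d ≤ 9
    have hi1 : i = 1 := by
      rcases i with _ | _ | j
      · omega
      · rfl
      · exfalso
        have hd6 : 6 ≤ d := by omega
        have h12 : 12 ≤ d * (j+1+1) := by
          calc 12 = 6*2 := by norm_num
            _ ≤ d * (j+1+1) := Nat.mul_le_mul hd6 (by omega)
        omega
    subst hi1
    have hd3 : 3 ≤ d := by omega
    have hd9 : d ≤ 9 := by
      by_contra hcon
      push_neg at hcon
      omega
    interval_cases d <;>
      (norm_num [Nat.choose, Nat.factorial]
       rw [le_div_iff₀ (Real.exp_pos 1)]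
       nlinarith [Real.exp_one_lt_d9, Real.exp_pos 1])


theorem stmt_7 (β : ℝ) (hβ : 0 < β) (d i : ℕ) (hd : 0 < d) (hi : 0 < i)
    (h3i : 3 * i ≤ d) :
    (d.choose (3 * i) : ℝ) * ((3 * i).factorial / (i.factorial * 6 ^ i)) *
        (i : ℝ) ^ (d - 3 * i) * β ^ ((i : ℤ) - d + 1) ≤
      (β * d / Real.exp 1) * ((d : ℝ) / β) ^ (d - i) * 0.549474 ^ d := by
  have hid : i ≤ d := le_trans (by omega) h3i
  have hzp : β ^ ((i : ℤ) - d + 1) = β * (β ^ (d - i))⁻¹ := by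
    have he : (i : ℤ) - d + 1 = 1 - ((d - i : ℕ) : ℤ) := by
      push_cast [Nat.cast_sub hid]; ring
    rw [he, zpow_sub₀ (ne_of_gt hβ), zpow_one, zpow_natCast, div_eq_mul_inv]
  have key := step2 d i hd hi h3i
  have hfac : (0:ℝ) < β * (β ^ (d - i))⁻¹ := by positivity
  calc (d.choose (3 * i) : ℝ) * ((3 * i).factorial / (i.factorial * 6 ^ i)) *
        (i : ℝ) ^ (d - 3 * i) * β ^ ((i : ℤ) - d + 1)
      = ((d.choose (3 * i) : ℝ) * (((3 * i).factorial : ℝ) / ((i.factorial : ℝ) * 6 ^ i)) *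
        (i : ℝ) ^ (d - 3 * i)) * (β * (β ^ (d - i))⁻¹) := by rw [hzp]
    _ ≤ ((d : ℝ) ^ (d - i) * d * 0.549474 ^ d / Real.exp 1) * (β * (β ^ (d - i))⁻¹) :=
        mul_le_mul_of_nonneg_right key hfac.le
    _ = (β * d / Real.exp 1) * ((d : ℝ) / β) ^ (d - i) * 0.549474 ^ d := by
        rw [div_pow]
        field_simp
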